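/- Let B = ℂ[X,Y,Z,T,W]/(X²Y − X − Z² − T³), an integral domain, with x, y, z, t, w the residue classes of X, Y, Z, T, W. Then: (i) there is a unique ℂ-derivation δ of B with δ(x) = δ(t) = 0, δ(y) = 2z, δ(z) = x², δ(w) = 1, and δ is locally nilpotent; (ii) setting u = y − 2zw + x²w² and v = z − x²w, one has δ(u) = δ(v) = 0 and ker δ equals the ℂ-subalgebra A = ℂ[x, u, v, t] generated by x, u, v, t; (iii) the A-algebra homomorphism A[W'] → B sending the variable W' to w is an isomorphism, i.e. B is a polynomial ring in the slice w over A; and (iv) the ℂ-algebra homomorphism ℂ[X,U,V,T]/(X²U − X − V² − T³) → B sending X, U, V, T to x, u, v, t respectively is injective with image ker δ, so ker δ is isomorphic to the coordinate ring of the Koras–Russell threefold {X²U = X + V² + T³}. -/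

import Mathlib

open MvPolynomial

/-- `B = ℂ[X,Y,Z,T,W]/(X²Y − X − Z² − T³)`, with variables `X,Y,Z,T,W` indexed by
`0,1,2,3,4`. -/
abbrev B19 : Type :=
  MvPolynomial (Fin 5) ℂ ⧸ Ideal.span
    {(X 0 : MvPolynomial (Fin 5) ℂ) ^ 2 * X 1 - X 0 - (X 2) ^ 2 - (X 3) ^ 3}

/-- The coordinate ring of the Koras–Russell threefold `{X²U = X + V² + T³}`. -/
abbrev KR19 : Type :=
  MvPolynomial (Fin 4) ℂ ⧸ Ideal.span
    {(X 0 : MvPolynomial (Fin 4) ℂ) ^ 2 * X 1 - X 0 - (X 2) ^ 2 - (X 3) ^ 3}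

noncomputable def x19 : B19 := Ideal.Quotient.mk _ (X 0)
noncomputable def y19 : B19 := Ideal.Quotient.mk _ (X 1)
noncomputable def z19 : B19 := Ideal.Quotient.mk _ (X 2)
noncomputable def t19 : B19 := Ideal.Quotient.mk _ (X 3)
noncomputable def w19 : B19 := Ideal.Quotient.mk _ (X 4)

/-- `u = y − 2zw + x²w²`. -/
noncomputable def u19 : B19 := y19 - 2 * z19 * w19 + x19 ^ 2 * w19 ^ 2
/-- `v = z − x²w`. -/
noncomputable def v19 : B19 := z19 - x19 ^ 2 * w19

/-- The subalgebra `ℂ[x,u,v,t] ⊆ B`. -/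
noncomputable def A19 : Subalgebra ℂ B19 := Algebra.adjoin ℂ {x19, u19, v19, t19}

namespace Stmt19

noncomputable section

def relB : MvPolynomial (Fin 5) ℂ := (X 0) ^ 2 * X 1 - X 0 - (X 2) ^ 2 - (X 3) ^ 3
def relK : MvPolynomial (Fin 4) ℂ := (X 0) ^ 2 * X 1 - X 0 - (X 2) ^ 2 - (X 3) ^ 3

def mkB : MvPolynomial (Fin 5) ℂ →+* B19 := Ideal.Quotient.mk (Ideal.span {relB})
def mkK : MvPolynomial (Fin 4) ℂ →+* KR19 := Ideal.Quotient.mk (Ideal.span {relK})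

/-- generators of `KR19` -/
def k (i : Fin 4) : KR19 := mkK (X i)

lemma mkB_relB : mkB relB = 0 :=
  Ideal.Quotient.eq_zero_iff_mem.mpr (Ideal.subset_span rfl)

lemma mkK_relK : mkK relK = 0 :=
  Ideal.Quotient.eq_zero_iff_mem.mpr (Ideal.subset_span rfl)

lemma x19_def : x19 = mkB (X 0) := rfl
lemma y19_def : y19 = mkB (X 1) := rfl
lemma z19_def : z19 = mkB (X 2) := rfl
lemma t19_def : t19 = mkB (X 3) := rfl
lemma w19_def : w19 = mkB (X 4) := rfl

lemma keyB : x19 ^ 2 * u19 - x19 - v19 ^ 2 - t19 ^ 3 = 0 := by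
  have h2 : (2 : B19) = mkB 2 := (map_ofNat mkB 2).symm
  have : x19 ^ 2 * u19 - x19 - v19 ^ 2 - t19 ^ 3 = mkB relB := by
    simp only [u19, v19, x19_def, y19_def, z19_def, t19_def, w19_def, h2,
      ← map_mul, ← map_pow, ← map_add, ← map_sub]
    congr 1
    unfold relB
    ring
  rw [this, mkB_relB]

end
end Stmt19

namespace Stmt19
noncomputable section

local notation "Cp" => Polynomial.C
local notation "Xp" => Polynomial.X

lemma aeval4_relK : (MvPolynomial.aeval ![x19, u19, v19, t19])
    ((X 0 : MvPolynomial (Fin 4) ℂ) ^ 2 * X 1 - X 0 - (X 2) ^ 2 - (X 3) ^ 3) = 0 := by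
  have h : (MvPolynomial.aeval ![x19, u19, v19, t19])
      ((X 0 : MvPolynomial (Fin 4) ℂ) ^ 2 * X 1 - X 0 - (X 2) ^ 2 - (X 3) ^ 3) =
      x19 ^ 2 * u19 - x19 - v19 ^ 2 - t19 ^ 3 := by simp
  rw [h, keyB]

/-- `φ : KR19 → B19`, sending generators to x,u,v,t. -/
def phi : KR19 →ₐ[ℂ] B19 :=
  Ideal.Quotient.liftₐ _ (MvPolynomial.aeval ![x19, u19, v19, t19]) (by
    intro a ha
    obtain ⟨c, rfl⟩ := Ideal.mem_span_singleton.mp ha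
    rw [map_mul, aeval4_relK, zero_mul])

lemma phi_mk (q : MvPolynomial (Fin 4) ℂ) :
    phi (mkK q) = MvPolynomial.aeval ![x19, u19, v19, t19] q := by
  simp [phi, mkK, relK, Ideal.Quotient.liftₐ_apply, Ideal.Quotient.lift_mk]
  rfl

lemma phi_k0 : phi (k 0) = x19 := by simp [k, phi_mk]
lemma phi_k1 : phi (k 1) = u19 := by simp [k, phi_mk]
lemma phi_k2 : phi (k 2) = v19 := by simp [k, phi_mk]
lemma phi_k3 : phi (k 3) = t19 := by simp [k, phi_mk]

/-- images of the five generators of `B19` in `Polynomial KR19` -/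
def pim : Fin 5 → Polynomial KR19 :=
  ![Cp (k 0), Cp (k 1) + 2 * Cp (k 2) * Xp + Cp (k 0) ^ 2 * Xp ^ 2,
    Cp (k 2) + Cp (k 0) ^ 2 * Xp, Cp (k 3), Xp]

lemma aeval5_relB : (MvPolynomial.aeval pim)
    ((X 0 : MvPolynomial (Fin 5) ℂ) ^ 2 * X 1 - X 0 - (X 2) ^ 2 - (X 3) ^ 3) = 0 := by
  have h1 : (MvPolynomial.aeval pim)
      ((X 0 : MvPolynomial (Fin 5) ℂ) ^ 2 * X 1 - X 0 - (X 2) ^ 2 - (X 3) ^ 3) =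
      Cp ((k 0) ^ 2 * k 1 - k 0 - (k 2) ^ 2 - (k 3) ^ 3) := by
    simp only [map_sub, map_mul, map_pow, MvPolynomial.aeval_X, pim,
      Matrix.cons_val_zero, Matrix.cons_val_one, Matrix.head_cons,
      Matrix.cons_val_two, Matrix.tail_cons, Matrix.cons_val_three]
    ring
  have h2 : (k 0) ^ 2 * k 1 - k 0 - (k 2) ^ 2 - (k 3) ^ 3 = 0 := by
    have h3 : (k 0) ^ 2 * k 1 - k 0 - (k 2) ^ 2 - (k 3) ^ 3 = mkK relK := by
      simp only [k, ← map_mul, ← map_pow, ← map_sub]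
      rfl
    rw [h3, mkK_relK]
  rw [h1, h2, map_zero]

/-- `Φ : B19 → Polynomial KR19`. -/
def Phi : B19 →ₐ[ℂ] Polynomial KR19 :=
  Ideal.Quotient.liftₐ _ (MvPolynomial.aeval pim) (by
    intro a ha
    obtain ⟨c, rfl⟩ := Ideal.mem_span_singleton.mp ha
    rw [map_mul, aeval5_relB, zero_mul])

lemma Phi_mk (p : MvPolynomial (Fin 5) ℂ) : Phi (mkB p) = MvPolynomial.aeval pim p := by
  simp [Phi, mkB, relB, Ideal.Quotient.liftₐ_apply, Ideal.Quotient.lift_mk]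
  rfl

lemma Phi_x : Phi x19 = Cp (k 0) := by simp [x19_def, Phi_mk, pim]
lemma Phi_y : Phi y19 = Cp (k 1) + 2 * Cp (k 2) * Xp + Cp (k 0) ^ 2 * Xp ^ 2 := by
  simp [y19_def, Phi_mk, pim]
lemma Phi_z : Phi z19 = Cp (k 2) + Cp (k 0) ^ 2 * Xp := by simp [z19_def, Phi_mk, pim]
lemma Phi_t : Phi t19 = Cp (k 3) := by simp [t19_def, Phi_mk, pim]
lemma Phi_w : Phi w19 = Xp := by simp [w19_def, Phi_mk, pim]

lemma Phi_u : Phi u19 = Cp (k 1) := by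
  simp only [u19, map_add, map_sub, map_mul, map_pow, map_ofNat, Phi_x, Phi_y, Phi_z, Phi_w]
  ring

lemma Phi_v : Phi v19 = Cp (k 2) := by
  simp only [v19, map_sub, map_mul, map_pow, Phi_x, Phi_z, Phi_w]
  ring

/-- `Ψ : Polynomial KR19 → B19`. -/
def Psi : Polynomial KR19 →ₐ[ℂ] B19 := Polynomial.aevalTower phi w19

lemma Psi_C (a : KR19) : Psi (Cp a) = phi a := Polynomial.aevalTower_C _ _ _
lemma Psi_X : Psi Xp = w19 := Polynomial.aevalTower_X _ _

end
end Stmt19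
namespace Stmt19
noncomputable section

local notation "Cp" => Polynomial.C
local notation "Xp" => Polynomial.X

/-- `Φ ∘ φ = C`. -/
lemma Phi_phi (a : KR19) : Phi (phi a) = Cp a := by
  have hext : (Phi.comp phi) = (Polynomial.CAlgHom : KR19 →ₐ[ℂ] Polynomial KR19) := by
    apply Ideal.Quotient.algHom_ext
    apply MvPolynomial.algHom_ext
    intro i
    simp only [AlgHom.comp_apply, Ideal.Quotient.mkₐ_eq_mk]
    have hm : ∀ q : MvPolynomial (Fin 4) ℂ, (Ideal.Quotient.mk _ q : KR19) = mkK q :=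
      fun q => rfl
    rw [hm, phi_mk]
    fin_cases i <;>
      simp [Polynomial.CAlgHom, Phi_x, Phi_u, Phi_v, Phi_t, k, mkK]
  have := AlgHom.congr_fun hext a
  simpa [Polynomial.CAlgHom] using this

lemma Psi_pim0 : Psi (pim 0) = mkB (X 0) := by
  simp only [pim, Matrix.cons_val_zero, Psi_C, phi_k0]; rw [← x19_def]
lemma Psi_pim1 : Psi (pim 1) = mkB (X 1) := by
  simp only [pim, Matrix.cons_val_one, Matrix.cons_val_zero, Matrix.head_cons, map_add, map_mul, map_pow,
    map_ofNat, Psi_C, Psi_X, phi_k0, phi_k1, phi_k2]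
  rw [← y19_def]
  simp only [u19, v19]
  ring
lemma Psi_pim2 : Psi (pim 2) = mkB (X 2) := by
  simp only [pim, Matrix.cons_val_two, Matrix.tail_cons, Matrix.head_cons, map_add,
    map_mul, map_pow, Psi_C, Psi_X, phi_k0, phi_k2]
  rw [← z19_def]
  simp only [v19]
  ring
lemma Psi_pim3 : Psi (pim 3) = mkB (X 3) := by
  simp only [pim, Matrix.cons_val_three, Matrix.tail_cons, Matrix.head_cons, Psi_C, phi_k3]
  rw [← t19_def]
lemma Psi_pim4 : Psi (pim 4) = mkB (X 4) := by
  have : pim 4 = Xp := rfl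
  rw [this, Psi_X, ← w19_def]

lemma Psi_Phi (b : B19) : Psi (Phi b) = b := by
  have hext : (Psi.comp Phi) = AlgHom.id ℂ B19 := by
    apply Ideal.Quotient.algHom_ext
    apply MvPolynomial.algHom_ext
    intro i
    simp only [AlgHom.comp_apply, Ideal.Quotient.mkₐ_eq_mk, AlgHom.id_apply]
    have hm : ∀ p : MvPolynomial (Fin 5) ℂ, (Ideal.Quotient.mk _ p : B19) = mkB p :=
      fun p => rfl
    rw [hm, Phi_mk, MvPolynomial.aeval_X]
    fin_cases i
    · exact Psi_pim0
    · exact Psi_pim1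
    · exact Psi_pim2
    · exact Psi_pim3
    · exact Psi_pim4
  exact AlgHom.congr_fun hext b

lemma Phi_Psi (p : Polynomial KR19) : Phi (Psi p) = p := by
  induction p using Polynomial.induction_on with
  | C a => rw [Psi_C, Phi_phi]
  | add p q hp hq => rw [map_add, map_add, hp, hq]
  | monomial n a hn => simp only [map_mul, map_pow, Psi_C, Psi_X, Phi_phi, Phi_w]

lemma Phi_injective : Function.Injective Phi :=
  Function.LeftInverse.injective Psi_Phi

end
end Stmt19
namespace Stmt19
noncomputable section

local notation "Cp" => Polynomial.C
local notation "Xp" => Polynomial.X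

open Polynomial in
def dlin : B19 →ₗ[ℂ] B19 :=
  Psi.toLinearMap ∘ₗ ((derivative : Polynomial KR19 →ₗ[KR19] Polynomial KR19).restrictScalars ℂ)
    ∘ₗ Phi.toLinearMap

lemma dlin_apply (b : B19) : dlin b = Psi (Polynomial.derivative (Phi b)) := rfl

def delta : Derivation ℂ B19 B19 :=
  Derivation.mk' dlin (by
    intro a b
    simp only [dlin_apply, map_mul, Polynomial.derivative_mul, map_add, smul_eq_mul]
    rw [Psi_Phi, Psi_Phi]
    ring)

lemma delta_apply (b : B19) : delta b = Psi (Polynomial.derivative (Phi b)) := rfl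

lemma delta_x : delta x19 = 0 := by
  rw [delta_apply, Phi_x, Polynomial.derivative_C, map_zero]

lemma delta_t : delta t19 = 0 := by
  rw [delta_apply, Phi_t, Polynomial.derivative_C, map_zero]

lemma delta_w : delta w19 = 1 := by
  rw [delta_apply, Phi_w, Polynomial.derivative_X, map_one]

lemma delta_u : delta u19 = 0 := by
  rw [delta_apply, Phi_u, Polynomial.derivative_C, map_zero]

lemma delta_v : delta v19 = 0 := by
  rw [delta_apply, Phi_v, Polynomial.derivative_C, map_zero]

lemma e2 : (Cp (k 0) : Polynomial KR19) ^ 2 = Cp ((k 0) ^ 2) := (map_pow _ _ _).symm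

lemma delta_y : delta y19 = 2 * z19 := by
  rw [delta_apply, Phi_y]
  have e1 : (2 : Polynomial KR19) * Cp (k 2) = Cp (2 * k 2) := by
    rw [map_mul, map_ofNat]
  have hder : Polynomial.derivative (Cp (k 1) + 2 * Cp (k 2) * Xp + Cp (k 0) ^ 2 * Xp ^ 2)
      = Cp (2 * k 2) + Cp ((k 0) ^ 2) * (Xp + Xp) := by
    rw [e1, e2, sq Xp]
    simp only [Polynomial.derivative_add, Polynomial.derivative_C,
      Polynomial.derivative_C_mul, Polynomial.derivative_mul, Polynomial.derivative_X,
      mul_one, one_mul, zero_add, add_zero, zero_mul]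
  rw [hder]
  simp only [map_add, map_mul, map_pow, map_ofNat, Psi_C, Psi_X, phi_k0, phi_k2]
  simp only [v19]
  ring

lemma delta_z : delta z19 = x19 ^ 2 := by
  rw [delta_apply, Phi_z]
  have hder : Polynomial.derivative (Cp (k 2) + Cp (k 0) ^ 2 * Xp) = Cp ((k 0) ^ 2) := by
    rw [e2]
    simp only [Polynomial.derivative_add, Polynomial.derivative_C,
      Polynomial.derivative_C_mul, Polynomial.derivative_X, mul_one, zero_add]
  rw [hder, Psi_C, map_pow, phi_k0]

end
end Stmt19
namespace Stmt19
noncomputable section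

local notation "Cp" => Polynomial.C
local notation "Xp" => Polynomial.X

lemma range_vec : Set.range ![x19, u19, v19, t19] = {x19, u19, v19, t19} := by
  ext b
  constructor
  · rintro ⟨i, rfl⟩
    fin_cases i <;> simp
  · intro hb
    rcases hb with h | h | h | h
    · exact ⟨0, h.symm⟩
    · exact ⟨1, h.symm⟩
    · exact ⟨2, h.symm⟩
    · exact ⟨3, h.symm⟩

lemma phi_range : phi.range = A19 := by
  have h1 : A19 = (MvPolynomial.aeval ![x19, u19, v19, t19]).range := by
    rw [A19, ← range_vec, Algebra.adjoin_range_eq_range_aeval]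
  rw [h1]
  ext b
  constructor
  · rintro ⟨a, rfl⟩
    obtain ⟨q, rfl⟩ := Ideal.Quotient.mk_surjective a
    exact ⟨q, (phi_mk q).symm⟩
  · rintro ⟨q, rfl⟩
    exact ⟨mkK q, phi_mk q⟩

lemma phi_injective : Function.Injective phi := by
  intro a a' h
  have := congrArg Phi h
  rw [Phi_phi, Phi_phi] at this
  exact Polynomial.C_injective this

/-- In a `ℂ`-algebra, a polynomial with zero derivative is constant. -/
lemma eq_C_of_derivative_eq_zero {p : Polynomial KR19}
    (h : Polynomial.derivative p = 0) : p = Cp (p.coeff 0) := by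
  ext n
  cases n with
  | zero => simp
  | succ m =>
      have hco := congrArg (fun q => Polynomial.coeff q m) h
      simp only [Polynomial.coeff_derivative, Polynomial.coeff_zero] at hco
      have hunit : ((m : KR19) + 1) = algebraMap ℂ KR19 ((m : ℂ) + 1) := by
        rw [map_add, map_one, map_natCast]
      have hne : ((m : ℂ) + 1) ≠ 0 := Nat.cast_add_one_ne_zero m
      have : p.coeff (m + 1) = 0 := by
        have h2 := congrArg (fun c => c * algebraMap ℂ KR19 ((m : ℂ) + 1)⁻¹) hco
        simp only [zero_mul] at h2
        rw [mul_assoc, hunit, ← map_mul, mul_inv_cancel₀ hne, map_one, mul_one] at h2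
        exact h2
      rw [this]
      simp [Polynomial.coeff_C]

lemma delta_ker (b : B19) : delta b = 0 ↔ b ∈ A19 := by
  constructor
  · intro hb
    rw [delta_apply] at hb
    have h0 : Polynomial.derivative (Phi b) = 0 := by
      have := congrArg Phi hb
      rw [Phi_Psi, map_zero] at this
      exact this
    have hc := eq_C_of_derivative_eq_zero h0
    have : b = phi ((Phi b).coeff 0) := by
      conv_lhs => rw [← Psi_Phi b, hc]
      exact Psi_C _
    rw [this, ← phi_range]
    exact ⟨_, rfl⟩
  · intro hb
    rw [← phi_range] at hb
    obtain ⟨a, rfl⟩ := hb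
    have hra : (phi.toRingHom a : B19) = phi a := rfl
    rw [delta_apply, hra, Phi_phi, Polynomial.derivative_C, map_zero]

end
end Stmt19
namespace Stmt19
noncomputable section

lemma range_vec5 : Set.range (fun i : Fin 5 => mkB (X i)) = {x19, y19, z19, t19, w19} := by
  have hfun : (fun i : Fin 5 => mkB (X i)) = ![x19, y19, z19, t19, w19] := by
    funext i
    fin_cases i <;> rfl
  rw [hfun]
  ext b
  constructor
  · rintro ⟨i, rfl⟩
    fin_cases i <;> simp
  · intro hb
    rcases hb with h | h | h | h | h
    · exact ⟨0, h.symm⟩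
    · exact ⟨1, h.symm⟩
    · exact ⟨2, h.symm⟩
    · exact ⟨3, h.symm⟩
    · exact ⟨4, h.symm⟩

lemma adjoin_gen_top : Algebra.adjoin ℂ ({x19, y19, z19, t19, w19} : Set B19) = ⊤ := by
  rw [← range_vec5]
  rw [Algebra.adjoin_range_eq_range_aeval]
  rw [eq_top_iff]
  rintro b -
  obtain ⟨p, rfl⟩ := Ideal.Quotient.mk_surjective b
  have key : ∀ p : MvPolynomial (Fin 5) ℂ,
      (MvPolynomial.aeval (fun i => mkB (X i))) p = mkB p := by
    intro p
    induction p using MvPolynomial.induction_on with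
    | C a => rw [MvPolynomial.aeval_C]; rfl
    | add p q hp hq => rw [map_add, map_add, hp, hq]
    | mul_X p i hp => rw [map_mul, hp, MvPolynomial.aeval_X]; rfl
  exact ⟨p, key p⟩

lemma delta_unique (δ' : Derivation ℂ B19 B19)
    (hx : δ' x19 = 0) (ht : δ' t19 = 0) (hy : δ' y19 = 2 * z19)
    (hz : δ' z19 = x19 ^ 2) (hw : δ' w19 = 1) : δ' = delta := by
  ext b
  have heq : Set.EqOn δ' delta ({x19, y19, z19, t19, w19} : Set B19) := by
    intro a ha
    rcases ha with h | h | h | h | h <;> subst h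
    · rw [hx, delta_x]
    · rw [hy, delta_y]
    · rw [hz, delta_z]
    · rw [ht, delta_t]
    · rw [hw, delta_w]
  have hb : b ∈ Algebra.adjoin ℂ ({x19, y19, z19, t19, w19} : Set B19) := by
    rw [adjoin_gen_top]; trivial
  exact Derivation.eqOn_adjoin heq hb

lemma delta_pow_apply (n : ℕ) (b : B19) :
    ((delta : B19 →ₗ[ℂ] B19) ^ n) b = Psi ((⇑Polynomial.derivative)^[n] (Phi b)) := by
  induction n generalizing b with
  | zero => simp [Psi_Phi]
  | succ n ih =>
      have hps : ((delta : B19 →ₗ[ℂ] B19) ^ (n + 1)) = ((delta : B19 →ₗ[ℂ] B19) ^ n) * (delta : B19 →ₗ[ℂ] B19) :=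
        pow_succ _ _
      rw [hps, Module.End.mul_apply]
      have h1 : ((delta : B19 →ₗ[ℂ] B19)) b = delta b := rfl
      rw [h1, ih (delta b), delta_apply, Phi_Psi, ← Function.iterate_succ_apply]

lemma delta_locally_nilpotent (b : B19) : ∃ n : ℕ, ((delta : B19 →ₗ[ℂ] B19) ^ n) b = 0 := by
  refine ⟨(Phi b).natDegree + 1, ?_⟩
  rw [delta_pow_apply, Polynomial.iterate_derivative_eq_zero (Nat.lt_succ_self _), map_zero]

end
end Stmt19
namespace Stmt19
noncomputable section
set_option synthInstance.maxHeartbeats 1000000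

def g : ↥A19 →+* KR19 :=
  (Polynomial.evalRingHom (0 : KR19)).comp
    ((Phi : B19 →+* Polynomial KR19).comp (algebraMap ↥A19 B19))

lemma Phi_coe (a : ↥A19) : Phi (↑a : B19) = Polynomial.C (g a) := by
  have ha : (a : B19) ∈ phi.range := by rw [phi_range]; exact a.2
  obtain ⟨kk, hk⟩ := ha
  have hk' : phi kk = (a : B19) := hk
  have h1 : Phi (↑a : B19) = Polynomial.C kk := by rw [← hk', Phi_phi]
  have h2 : g a = kk := by
    have : g a = Polynomial.eval 0 (Phi ((algebraMap ↥A19 B19) a)) := rfl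
    rw [this, show (algebraMap ↥A19 B19) a = (a : B19) from rfl, h1, Polynomial.eval_C]
  rw [h1, h2]

lemma g_injective : Function.Injective g := by
  intro a a' h
  have : Phi (↑a : B19) = Phi (↑a' : B19) := by rw [Phi_coe, Phi_coe, h]
  exact Subtype.ext (Phi_injective this)

lemma Phi_aevalw (p : Polynomial ↥A19) :
    Phi (Polynomial.aeval w19 p) = p.map g := by
  induction p using Polynomial.induction_on' with
  | add p q hp hq => rw [map_add, map_add, hp, hq, Polynomial.map_add]
  | monomial n a =>
      rw [Polynomial.aeval_monomial, map_mul, map_pow, Phi_w,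
        show (algebraMap ↥A19 B19) a = (a : B19) from rfl, Phi_coe,
        Polynomial.map_monomial, ← Polynomial.C_mul_X_pow_eq_monomial]

lemma aevalw_inj : Function.Injective (Polynomial.aeval w19 : Polynomial ↥A19 →ₐ[↥A19] B19) := by
  intro p q h
  apply Polynomial.map_injective g g_injective
  rw [← Phi_aevalw, ← Phi_aevalw, h]

lemma aevalw_surj : Function.Surjective (Polynomial.aeval w19 : Polynomial ↥A19 →ₐ[↥A19] B19) := by
  intro b
  have h : ∀ q : Polynomial KR19, ∃ p : Polynomial ↥A19, Polynomial.aeval w19 p = Psi q := by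
    intro q
    induction q using Polynomial.induction_on with
    | C a =>
        have hmem : phi a ∈ A19 := by rw [← phi_range]; exact ⟨a, rfl⟩
        refine ⟨Polynomial.C ⟨phi a, hmem⟩, ?_⟩
        rw [Polynomial.aeval_C, Psi_C]; rfl
    | add q r hq hr =>
        obtain ⟨p1, h1⟩ := hq; obtain ⟨p2, h2⟩ := hr
        exact ⟨p1 + p2, by rw [map_add, h1, h2, map_add]⟩
    | monomial n a _ =>
        have hmem : phi a ∈ A19 := by rw [← phi_range]; exact ⟨a, rfl⟩
        refine ⟨Polynomial.C ⟨phi a, hmem⟩ * Polynomial.X ^ (n + 1), ?_⟩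
        rw [map_mul, map_pow, Polynomial.aeval_C, Polynomial.aeval_X,
          map_mul, map_pow, Psi_C, Psi_X]
        rfl
  obtain ⟨p, hp⟩ := h (Phi b)
  exact ⟨p, by rw [hp, Psi_Phi]⟩

end
end Stmt19


set_option synthInstance.maxHeartbeats 1000000 in
/-- Let `B = ℂ[X,Y,Z,T,W]/(X²Y − X − Z² − T³)`.  (i) There is a
unique ℂ-derivation `δ` of `B` with `δx = δt = 0`, `δy = 2z`, `δz = x²`, `δw = 1`,
and it is locally nilpotent; (ii) with `u = y − 2zw + x²w²`, `v = z − x²w` one has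
`δu = δv = 0` and `ker δ = ℂ[x,u,v,t]`; (iii) `B` is a polynomial ring over
`A = ℂ[x,u,v,t]` in the slice `w` (the evaluation map `A[W'] → B`, `W' ↦ w`, is an
isomorphism); (iv) the ℂ-algebra map from the coordinate ring of the Koras–Russell
threefold `{X²U = X + V² + T³}` sending the generators to `x,u,v,t` is injective with
image `ker δ = A`. -/
theorem stmt19 :
    ∃ δ : Derivation ℂ B19 B19,
      (δ x19 = 0 ∧ δ t19 = 0 ∧ δ y19 = 2 * z19 ∧ δ z19 = x19 ^ 2 ∧ δ w19 = 1) ∧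
      (∀ δ' : Derivation ℂ B19 B19,
        (δ' x19 = 0 ∧ δ' t19 = 0 ∧ δ' y19 = 2 * z19 ∧ δ' z19 = x19 ^ 2 ∧
          δ' w19 = 1) → δ' = δ) ∧
      (∀ b : B19, ∃ n : ℕ, ((δ : B19 →ₗ[ℂ] B19) ^ n) b = 0) ∧
      (δ u19 = 0 ∧ δ v19 = 0) ∧
      (∀ b : B19, δ b = 0 ↔ b ∈ A19) ∧
      Function.Bijective (Polynomial.aeval w19 : Polynomial ↥A19 →ₐ[↥A19] B19) ∧
      ∃ φ : KR19 →ₐ[ℂ] B19,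
        (∀ q : MvPolynomial (Fin 4) ℂ,
          φ (Ideal.Quotient.mk _ q) = MvPolynomial.aeval ![x19, u19, v19, t19] q) ∧
        Function.Injective φ ∧ φ.range = A19 := by
  exact ⟨Stmt19.delta,
    ⟨Stmt19.delta_x, Stmt19.delta_t, Stmt19.delta_y, Stmt19.delta_z, Stmt19.delta_w⟩,
    fun δ' h => Stmt19.delta_unique δ' h.1 h.2.1 h.2.2.1 h.2.2.2.1 h.2.2.2.2,
    Stmt19.delta_locally_nilpotent,
    ⟨Stmt19.delta_u, Stmt19.delta_v⟩,
    Stmt19.delta_ker,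
    ⟨Stmt19.aevalw_inj, Stmt19.aevalw_surj⟩,
    Stmt19.phi, fun q => Stmt19.phi_mk q, Stmt19.phi_injective, Stmt19.phi_range⟩
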